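/- Every good subset of a regular topological space is compact. Here, given a fixed winning strategy σ for Bob in the long finite-selection open-cover game of length κ on a space X, a set K ⊆ X is called good if there exists a partial play s (a sequence of open covers of length < κ) such that K equals the intersection over all open covers C of X of the closures of the unions of Bob's responses σ(s⌢C). -/

import Mathlib

universe u

/-- A family of sets is an open cover: all members are open and their union is the whole space. -/
def IsOpenCover {X : Type u} [TopologicalSpace X] (𝒞 : Set (Set X)) : Prop :=
  (∀ U ∈ 𝒞, IsOpen U) ∧ ⋃₀ 𝒞 = Set.univ

/-- A strategy for Bob in the game `G_fin^κ(O,O)`: at inning `ξ < κ`, given the history of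
Alice's previous moves and Alice's current open cover `𝒞`, Bob picks a finite subfamily of `𝒞`. -/
structure BobStratFin (X : Type u) [TopologicalSpace X] (κ : Ordinal.{u}) where
  move : ∀ ξ : Ordinal.{u}, ξ < κ → (∀ α : Ordinal.{u}, α < ξ → Set (Set X)) →
    Set (Set X) → Finset (Set X)
  subset : ∀ ξ hξ hist 𝒞, (↑(move ξ hξ hist 𝒞) : Set (Set X)) ⊆ 𝒞

/-- The strategy is winning: against every play of open covers by Alice, the union of all of
Bob's finite selections covers the space. -/
def BobStratFin.Winning {X : Type u} [TopologicalSpace X] {κ : Ordinal.{u}}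
    (S : BobStratFin X κ) : Prop :=
  ∀ f : ∀ ξ : Ordinal.{u}, ξ < κ → Set (Set X),
    (∀ ξ hξ, IsOpenCover (f ξ hξ)) →
    (⋃ ξ, ⋃ hξ : ξ < κ,
      ⋃₀ (↑(S.move ξ hξ (fun α hα => f α (hα.trans hξ)) (f ξ hξ)) : Set (Set X))) = Set.univ

/-- `K` is good: there is a partial play `s` (a sequence of open covers of length `ξ < κ`)
such that `K` is the intersection, over all open covers `𝒞`, of the closures of the unions of
Bob's responses `σ(s⌢𝒞)`. -/
def BobStratFin.Good {X : Type u} [TopologicalSpace X] {κ : Ordinal.{u}}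
    (S : BobStratFin X κ) (K : Set X) : Prop :=
  ∃ (ξ : Ordinal.{u}) (hξ : ξ < κ) (hist : ∀ α : Ordinal.{u}, α < ξ → Set (Set X)),
    (∀ α hα, IsOpenCover (hist α hα)) ∧
    K = ⋂ 𝒞 : {𝒞 : Set (Set X) // IsOpenCover 𝒞},
          closure (⋃₀ (↑(S.move ξ hξ hist 𝒞.1) : Set (Set X)))

/-- Every good subset of a regular space is compact. -/
theorem good_isCompact {X : Type u} [TopologicalSpace X] [RegularSpace X]
    {κ : Ordinal.{u}} (S : BobStratFin X κ) (hS : S.Winning)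
    {K : Set X} (hK : S.Good K) : IsCompact K := by
  classical
  obtain ⟨ξ, hξ, hist, hcov, hKeq⟩ := hK
  have hKclosed : IsClosed K := by
    rw [hKeq]; exact isClosed_iInter fun _ => isClosed_closure
  apply isCompact_of_finite_subcover
  intro ι U hUopen hcover
  rcases K.eq_empty_or_nonempty with h | ⟨x₀, hx₀⟩
  · exact ⟨∅, by simp [h]⟩
  obtain ⟨i₀, hi₀⟩ := Set.mem_iUnion.mp (hcover hx₀)
  set 𝒞 : Set (Set X) :=
    {W | IsOpen W ∧ ((∃ i, closure W ⊆ U i) ∨ closure W ∩ K = ∅)} with h𝒞def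
  have h𝒞 : IsOpenCover 𝒞 := by
    constructor
    · intro W hW; exact hW.1
    · apply Set.eq_univ_of_forall
      intro y
      by_cases hy : y ∈ K
      · obtain ⟨i, hi⟩ := Set.mem_iUnion.mp (hcover hy)
        obtain ⟨V, hVnhds, hVclosed, hVsub⟩ :=
          exists_mem_nhds_isClosed_subset ((hUopen i).mem_nhds hi)
        exact ⟨interior V,
          ⟨isOpen_interior,
            Or.inl ⟨i, (closure_minimal interior_subset hVclosed).trans hVsub⟩⟩,
          mem_interior_iff_mem_nhds.mpr hVnhds⟩
      · obtain ⟨V, hVnhds, hVclosed, hVsub⟩ :=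
          exists_mem_nhds_isClosed_subset (hKclosed.isOpen_compl.mem_nhds hy)
        refine ⟨interior V, ⟨isOpen_interior, Or.inr ?_⟩,
          mem_interior_iff_mem_nhds.mpr hVnhds⟩
        have hsub : closure (interior V) ⊆ Kᶜ :=
          (closure_minimal interior_subset hVclosed).trans hVsub
        rw [Set.eq_empty_iff_forall_notMem]
        rintro z ⟨hz1, hz2⟩; exact hsub hz1 hz2
  set F := S.move ξ hξ hist 𝒞 with hF
  have hKsub : K ⊆ closure (⋃₀ (↑F : Set (Set X))) := by
    rw [hKeq]
    exact Set.iInter_subset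
      (fun 𝒟 : {𝒟 : Set (Set X) // IsOpenCover 𝒟} =>
        closure (⋃₀ (↑(S.move ξ hξ hist 𝒟.1) : Set (Set X)))) ⟨𝒞, h𝒞⟩
  have hFsub : (↑F : Set (Set X)) ⊆ 𝒞 := S.subset ξ hξ hist 𝒞
  let g : Set X → ι := fun A => if h : ∃ i, closure A ⊆ U i then h.choose else i₀
  refine ⟨F.image g, fun x hx => ?_⟩
  have hx' := hKsub hx
  have hcl : closure (⋃₀ (↑F : Set (Set X))) = ⋃ A ∈ (↑F : Set (Set X)), closure A := by
    exact F.finite_toSet.closure_sUnion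
  rw [hcl] at hx'
  obtain ⟨A, hA, hxA⟩ := Set.mem_iUnion₂.mp hx'
  rcases (hFsub hA).2 with hex | hdisj
  · have hgA : closure A ⊆ U (g A) := by
      simp only [g, dif_pos hex]
      exact hex.choose_spec
    exact Set.mem_biUnion (Finset.mem_image_of_mem g hA) (hgA hxA)
  · exact absurd (Set.mem_inter hxA hx) (by rw [hdisj]; exact Set.notMem_empty x)
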